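/- arXiv:1910.01876 — 5 statements merged into one kernel-verified Lean document; each statement's English description precedes it below -/
import Mathlib

section
/- For all integers n ≥ 0 and r ≥ 1, the derivative at x = 0 of the real function x ↦ (1/n!) · ∏_{i=0}^{n−1} (x + r + i) (that is, x ↦ binom(x+n+r−1, n) as a polynomial in x) equals the hyperharmonic number h_n^{(r)}. -/
/-- The hyperharmonic numbers: `hyperharmonic n 0 = 1/n`, `hyperharmonic 0 r = 0`,
and `hyperharmonic n r = ∑_{k=1}^{n} hyperharmonic k (r-1)` for `r ≥ 1`. -/
noncomputable def hyperharmonic : ℕ → ℕ → ℝ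
  | n, 0 => 1 / n
  | n, (r + 1) => ∑ k ∈ Finset.Icc 1 n, hyperharmonic k r
  termination_by n r => r

noncomputable def F (n r : ℕ) : ℝ → ℝ := fun x =>
  (1 / (Nat.factorial n : ℝ)) * ∏ i ∈ Finset.range n, (x + (r : ℝ) + (i : ℝ))

lemma sum_Icc_one (f : ℕ → ℝ) (n : ℕ) :
    ∑ k ∈ Finset.Icc 1 n, f k = ∑ i ∈ Finset.range n, f (i + 1) := by
  rw [← Finset.Ico_add_one_right_eq_Icc, Finset.sum_Ico_eq_sum_range]
  simp [add_comm]

lemma hyperharmonic_zero (r : ℕ) : hyperharmonic 0 r = 0 := by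
  cases r with
  | zero => simp [hyperharmonic]
  | succ m => simp [hyperharmonic]

lemma diffF (n r : ℕ) (x : ℝ) : DifferentiableAt ℝ (F n r) x := by
  unfold F
  exact (differentiableAt_const _).mul <|
    DifferentiableAt.fun_finsetProd fun i _ =>
      ((differentiableAt_id.add_const _).add_const _)

lemma prod_fact (n : ℕ) : ∏ i ∈ Finset.range n, ((i : ℝ) + 1) = (Nat.factorial n : ℝ) := by
  induction n with
  | zero => simp
  | succ n ih =>
      rw [Finset.prod_range_succ, ih, Nat.factorial_succ]
      push_cast; ring

lemma F_zero_one (n : ℕ) : F n 1 0 = 1 := by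
  have h : ∏ i ∈ Finset.range n, ((0:ℝ) + ((1:ℕ):ℝ) + (i:ℝ)) =
      ∏ i ∈ Finset.range n, ((i : ℝ) + 1) := by
    apply Finset.prod_congr rfl; intro i _; push_cast; ring
  have hne : (Nat.factorial n : ℝ) ≠ 0 := by positivity
  simp only [F, h, prod_fact]
  field_simp

lemma hasDeriv_one (n : ℕ) :
    HasDerivAt (F n 1) (∑ i ∈ Finset.range n, 1 / ((i : ℝ) + 1)) 0 := by
  induction n with
  | zero =>
      have : F 0 1 = fun _ : ℝ => 1 := by funext x; simp [F]
      rw [this]; simpa using hasDerivAt_const (0:ℝ) (1:ℝ)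
  | succ n ih =>
      have h1 : ((n:ℝ)+1) ≠ 0 := by positivity
      have h2 : (Nat.factorial n : ℝ) ≠ 0 := by positivity
      have hfe : F (n+1) 1 = fun x => F n 1 x * ((x + 1 + n) / (n+1)) := by
        funext x
        simp only [F, Finset.prod_range_succ, Nat.factorial_succ, Nat.cast_mul, Nat.cast_add,
          Nat.cast_one]
        field_simp
      rw [hfe]
      have hg : HasDerivAt (fun x : ℝ => (x + 1 + n) / (n+1)) (1/(n+1)) 0 := by
        simpa using (((hasDerivAt_id (0:ℝ)).add_const (1:ℝ)).add_const (n:ℝ)).div_const ((n:ℝ)+1)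
      have key := ih.fun_mul hg
      rw [F_zero_one, one_mul] at key
      have hdiv : ((0:ℝ) + 1 + n) / ((n:ℝ)+1) = 1 := by
        rw [zero_add, add_comm]; exact div_self h1
      rw [hdiv, mul_one] at key
      rw [Finset.sum_range_succ]
      convert key using 2 <;> (push_cast; try ring)

lemma hockey (n r : ℕ) (x : ℝ) : F n (r+1) x = ∑ k ∈ Finset.range (n+1), F k r x := by
  induction n with
  | zero => simp [F]
  | succ n ih =>
      rw [Finset.sum_range_succ, ← ih]
      have h1 : ((n:ℝ)+1) ≠ 0 := by positivity
      have h2 : (Nat.factorial n : ℝ) ≠ 0 := by positivity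
      have hA : ∏ i ∈ Finset.range (n+1), (x + ((r+1:ℕ):ℝ) + (i:ℝ)) =
          (∏ i ∈ Finset.range n, (x + ((r+1:ℕ):ℝ) + (i:ℝ))) * (x + (r:ℝ) + 1 + n) := by
        rw [Finset.prod_range_succ]; push_cast; ring
      have hB : ∏ i ∈ Finset.range (n+1), (x + (r:ℝ) + (i:ℝ)) =
          (∏ i ∈ Finset.range n, (x + ((r+1:ℕ):ℝ) + (i:ℝ))) * (x + (r:ℝ)) := by
        rw [Finset.prod_range_succ']
        push_cast
        congr 1
        · apply Finset.prod_congr rfl; intro i _; push_cast; ring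
        · ring
      simp only [F]
      rw [hA, hB, Nat.factorial_succ]
      push_cast
      field_simp
      ring

lemma main_aux : ∀ r : ℕ, 1 ≤ r → ∀ n : ℕ, deriv (F n r) 0 = hyperharmonic n r := by
  intro r
  induction r with
  | zero => intro h; omega
  | succ m ih =>
      intro _ n
      cases Nat.eq_zero_or_pos m with
      | inl hm =>
          subst hm
          rw [(hasDeriv_one n).deriv]
          conv_rhs => rw [hyperharmonic]
          rw [sum_Icc_one]
          apply Finset.sum_congr rfl
          intro i _
          rw [hyperharmonic]
          push_cast
          ring
      | inr hm =>
          have hF : F n (m+1) = fun x => ∑ k ∈ Finset.range (n+1), F k m x :=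
            funext (hockey n m)
          rw [hF, deriv_fun_sum (fun k _ => diffF k m 0)]
          have hd : ∀ k, deriv (F k m) 0 = hyperharmonic k m := fun k => ih hm k
          simp only [hd]
          rw [Finset.sum_range_succ']
          conv_rhs => rw [hyperharmonic]
          rw [sum_Icc_one, hyperharmonic_zero, add_zero]

theorem deriv_binomial_eq_hyperharmonic (n r : ℕ) (hr : 1 ≤ r) :
    deriv (fun x : ℝ => (1 / (Nat.factorial n : ℝ)) *
        ∏ i ∈ Finset.range n, (x + (r : ℝ) + (i : ℝ))) 0 = hyperharmonic n r := by
  exact main_aux r hr n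
end

section
/- For all integers k ≥ 2 and n ≥ 0, ∑_{i=0}^{k} (−1)^{i}·binom(k,i)·(n+i)·H_{n+i} = (k−2)! / ((n+1)(n+2)⋯(n+k−1)), i.e. the alternating binomial sum of (n+i)·H_{n+i} equals (k−2)!/((n+1)^{\overline{k−1}}). -/
open Finset

private lemma diff_step (f : ℕ → ℚ) (k n : ℕ) :
    ∑ i ∈ range (k + 2), (-1 : ℚ) ^ i * ((k + 1).choose i : ℚ) * f (n + i) =
      (∑ i ∈ range (k + 1), (-1 : ℚ) ^ i * (k.choose i : ℚ) * f (n + i)) -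
        ∑ i ∈ range (k + 1), (-1 : ℚ) ^ i * (k.choose i : ℚ) * f (n + 1 + i) := by
  rw [Finset.sum_range_succ' (fun i => (-1 : ℚ) ^ i * ((k + 1).choose i : ℚ) * f (n + i))]
  have hch : ∀ i, (((k + 1).choose (i + 1) : ℕ) : ℚ) = (k.choose i : ℚ) + (k.choose (i + 1) : ℚ) := by
    intro i; rw [Nat.choose_succ_succ]; push_cast; ring
  have h1 : ∑ i ∈ range (k + 1), (-1 : ℚ) ^ (i + 1) * ((k + 1).choose (i + 1) : ℚ) * f (n + (i + 1))
      = (∑ i ∈ range (k + 1), (-1 : ℚ) ^ (i + 1) * (k.choose i : ℚ) * f (n + (i + 1)))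
        + ∑ i ∈ range (k + 1), (-1 : ℚ) ^ (i + 1) * (k.choose (i + 1) : ℚ) * f (n + (i + 1)) := by
    rw [← Finset.sum_add_distrib]
    refine Finset.sum_congr rfl fun i _ => ?_
    rw [hch]; ring
  have h2 : ∑ i ∈ range (k + 1), (-1 : ℚ) ^ (i + 1) * (k.choose (i + 1) : ℚ) * f (n + (i + 1))
      = (∑ i ∈ range (k + 1), (-1 : ℚ) ^ i * (k.choose i : ℚ) * f (n + i)) - f n := by
    rw [Finset.sum_range_succ (fun i => (-1 : ℚ) ^ (i + 1) * (k.choose (i + 1) : ℚ) * f (n + (i + 1)))]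
    rw [Finset.sum_range_succ' (fun i => (-1 : ℚ) ^ i * (k.choose i : ℚ) * f (n + i))]
    simp [Nat.choose_succ_self]
  have h3 : ∑ i ∈ range (k + 1), (-1 : ℚ) ^ (i + 1) * (k.choose i : ℚ) * f (n + (i + 1))
      = - ∑ i ∈ range (k + 1), (-1 : ℚ) ^ i * (k.choose i : ℚ) * f (n + 1 + i) := by
    rw [← Finset.sum_neg_distrib]
    refine Finset.sum_congr rfl fun i _ => ?_
    have : n + (i + 1) = n + 1 + i := by omega
    rw [this]; ring
  simp only [h1, h2, h3]
  simp [Nat.choose_zero_right]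
  ring

theorem alternating_binomial_sum_mul_harmonic_shifted (k n : ℕ) (hk : 2 ≤ k) :
    ∑ i ∈ Finset.range (k + 1),
        (-1 : ℚ) ^ i * (Nat.choose k i : ℚ) * ((n : ℚ) + i) * harmonic (n + i) =
      (Nat.factorial (k - 2) : ℚ) / ∏ j ∈ Finset.range (k - 1), ((n : ℚ) + 1 + j) := by
  induction k, hk using Nat.le_induction generalizing n with
  | base =>
    have h1 : ((n : ℚ) + 1) ≠ 0 := by positivity
    have h2 : ((n : ℚ) + 2) ≠ 0 := by positivity
    simp only [Finset.sum_range_succ, Finset.sum_range_zero, Finset.prod_range_one]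
    rw [show n + 1 = (n + 0) + 1 from rfl, show n + 2 = (n + 0) + 1 + 1 from rfl,
      harmonic_succ, harmonic_succ]
    norm_num [Nat.choose]
    push_cast
    field_simp
    ring
  | succ k hk IH =>
    obtain ⟨m, rfl⟩ : ∃ m, k = m + 2 := ⟨k - 2, by omega⟩
    have key := diff_step (fun x => (x : ℚ) * harmonic x) (m + 2) n
    have cast1 : ∀ (p : ℕ), ∑ i ∈ range (m + 3), (-1 : ℚ) ^ i * ((m + 2).choose i : ℚ) *
        (((p + i : ℕ) : ℚ) * harmonic (p + i))
        = ∑ i ∈ range (m + 3), (-1 : ℚ) ^ i * ((m + 2).choose i : ℚ) * ((p : ℚ) + i) * harmonic (p + i) := by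
      intro p
      refine Finset.sum_congr rfl fun i _ => ?_
      push_cast; ring
    have cast0 : ∑ i ∈ range (m + 4), (-1 : ℚ) ^ i * ((m + 3).choose i : ℚ) *
        (((n + i : ℕ) : ℚ) * harmonic (n + i))
        = ∑ i ∈ range (m + 4), (-1 : ℚ) ^ i * ((m + 3).choose i : ℚ) * ((n : ℚ) + i) * harmonic (n + i) := by
      refine Finset.sum_congr rfl fun i _ => ?_
      push_cast; ring
    simp only [show m + 2 + 1 = m + 3 from rfl, show m + 2 + 2 = m + 4 from rfl] at key ⊢
    rw [cast0, cast1 n, cast1 (n + 1)] at key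
    rw [show m + 3 + 1 = m + 4 from rfl, key, IH n, IH (n + 1)]
    norm_num
    have hA : (0 : ℚ) < ∏ j ∈ range (m + 1), ((n : ℚ) + 1 + j) :=
      Finset.prod_pos fun j _ => by positivity
    have hB : (0 : ℚ) < ∏ j ∈ range (m + 1), ((n : ℚ) + 1 + 1 + j) :=
      Finset.prod_pos fun j _ => by positivity
    have hC : (0 : ℚ) < ∏ j ∈ range (m + 2), ((n : ℚ) + 1 + j) :=
      Finset.prod_pos fun j _ => by positivity
    have hC1 : ∏ j ∈ range (m + 2), ((n : ℚ) + 1 + j)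
        = (∏ j ∈ range (m + 1), ((n : ℚ) + 1 + j)) * ((n : ℚ) + 1 + ((m : ℚ) + 1)) := by
      rw [Finset.prod_range_succ]; push_cast; ring
    have hC2 : ∏ j ∈ range (m + 2), ((n : ℚ) + 1 + j)
        = ((n : ℚ) + 1) * ∏ j ∈ range (m + 1), ((n : ℚ) + 1 + 1 + j) := by
      rw [Finset.prod_range_succ' (fun j => (n : ℚ) + 1 + (j : ℚ))]
      have h : ∀ j ∈ range (m + 1), (n : ℚ) + 1 + ((j + 1 : ℕ) : ℚ) = (n : ℚ) + 1 + 1 + j :=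
        fun j _ => by push_cast; ring
      rw [Finset.prod_congr rfl h]
      push_cast; ring
    rw [show m + 3 - 2 = m + 1 from rfl, Nat.factorial_succ]
    push_cast
    rw [div_sub_div _ _ hA.ne' hB.ne', div_eq_div_iff (mul_pos hA hB).ne' hC.ne']
    linear_combination ((m.factorial : ℚ) * ∏ j ∈ range (m + 1), ((n : ℚ) + 1 + 1 + j)) * hC1
      - ((m.factorial : ℚ) * ∏ j ∈ range (m + 1), ((n : ℚ) + 1 + j)) * hC2
end

section
/- For every integer k ≥ 2, ∑_{i=1}^{k} (−1)^{i}·binom(k,i)·i·H_i = 1/(k−1). -/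
open Finset

lemma alt_choose_succ (n : ℕ) :
    ∑ j ∈ range (n+1), (-1:ℚ)^j * ((n+1).choose (j+1) : ℚ) = 1 := by
  have h := Int.alternating_sum_range_choose_of_ne (n := n+1) (by omega)
  have h2 : ∑ m ∈ range (n+2), (-1:ℚ)^m * ((n+1).choose m : ℚ) = 0 := by
    exact_mod_cast congrArg (fun z : ℤ => (z : ℚ)) h
  rw [Finset.sum_range_succ'] at h2
  simp only [pow_succ, pow_zero, one_mul, Nat.choose_zero_right, Nat.cast_one] at h2
  have e : ∀ x ∈ range (n+1), (-1:ℚ)^x * -1 * (((n+1).choose (x+1) : ℕ) : ℚ)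
      = -((-1:ℚ)^x * (((n+1).choose (x+1) : ℕ) : ℚ)) := by intro x _; ring
  rw [Finset.sum_congr rfl e, Finset.sum_neg_distrib] at h2
  linarith

lemma lemB (n : ℕ) :
    ∑ j ∈ range (n+1), (-1:ℚ)^j * (n.choose j : ℚ) / (j+1) = 1/(n+1) := by
  have key : ∀ j ∈ range (n+1), (-1:ℚ)^j * (n.choose j : ℚ) / (j+1)
      = (1/(n+1)) * ((-1:ℚ)^j * ((n+1).choose (j+1) : ℚ)) := by
    intro j _
    have h' : ((n+1).choose (j+1) : ℚ) * ((j:ℚ)+1) = ((n:ℚ)+1) * (n.choose j : ℚ) := by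
      exact_mod_cast (congrArg (fun z : ℕ => (z:ℚ)) (Nat.add_one_mul_choose_eq n j)).symm
    have hj : (j:ℚ) + 1 ≠ 0 := by positivity
    have hn : (n:ℚ) + 1 ≠ 0 := by positivity
    have hC : (((n+1).choose (j+1) : ℕ) : ℚ) = ((n:ℚ)+1) * (n.choose j:ℚ) / ((j:ℚ)+1) := by
      rw [eq_div_iff hj]; exact h'
    rw [hC]
    field_simp
  rw [Finset.sum_congr rfl key, ← Finset.mul_sum, alt_choose_succ, mul_one]

lemma lemA (n : ℕ) (hn : 1 ≤ n) :
    ∑ i ∈ range (n+1), (-1:ℚ)^i * (n.choose i : ℚ) * harmonic i = -1/n := by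
  induction n, hn using Nat.le_induction with
  | base =>
    simp [Finset.sum_range_succ, harmonic_succ, harmonic_zero]
  | succ n hn ih =>
    have hn0 : (n:ℚ) ≠ 0 := by positivity
    have hU : ∑ j ∈ range (n+1), (-1:ℚ)^j * (n.choose (j+1):ℚ) * harmonic (j+1) = 1/n := by
      have h1 : ∑ i ∈ range (n+2), (-1:ℚ)^i * (n.choose i:ℚ) * harmonic i = -1/n := by
        rw [Finset.sum_range_succ, Nat.choose_succ_self]
        simpa using ih
      rw [Finset.sum_range_succ'] at h1
      simp only [pow_succ, harmonic_zero, Rat.cast_zero, mul_zero, add_zero, pow_zero,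
        one_mul] at h1
      have e : ∀ x ∈ range (n+1), (-1:ℚ)^x * -1 * ((n.choose (x+1) : ℕ) : ℚ) * harmonic (x+1)
          = -((-1:ℚ)^x * ((n.choose (x+1) : ℕ) : ℚ) * harmonic (x+1)) := by intro x _; ring
      rw [Finset.sum_congr rfl e, Finset.sum_neg_distrib] at h1
      have hd : (-1:ℚ)/(n:ℚ) = -(1/(n:ℚ)) := by ring
      rw [hd] at h1
      linarith
    rw [Finset.sum_range_succ']
    simp only [harmonic_zero, mul_zero, add_zero]
    have expand : ∀ j ∈ range (n+1),
        (-1:ℚ)^(j+1) * (((n+1).choose (j+1) : ℕ) : ℚ) * harmonic (j+1)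
        = -((-1:ℚ)^j * (n.choose j:ℚ) * harmonic j)
          - ((-1:ℚ)^j * (n.choose j:ℚ) / (j+1))
          - ((-1:ℚ)^j * (n.choose (j+1):ℚ) * harmonic (j+1)) := by
      intro j _
      rw [Nat.choose_succ_succ, harmonic_succ]
      have hj : (j:ℚ) + 1 ≠ 0 := by positivity
      push_cast
      field_simp
      ring
    rw [Finset.sum_congr rfl expand]
    rw [Finset.sum_sub_distrib, Finset.sum_sub_distrib, Finset.sum_neg_distrib]
    rw [ih, lemB n, hU]
    push_cast
    field_simp
    ring

theorem alternating_binomial_sum_mul_harmonic (k : ℕ) (hk : 2 ≤ k) :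
    ∑ i ∈ Finset.Icc 1 k, (-1 : ℚ) ^ i * (Nat.choose k i : ℚ) * (i : ℚ) * harmonic i =
      1 / ((k : ℚ) - 1) := by
  obtain ⟨n, rfl⟩ : ∃ n, k = n + 1 := ⟨k - 1, by omega⟩
  have hn : 1 ≤ n := by omega
  have hn0 : (n:ℚ) ≠ 0 := by
    have : 0 < n := hn
    positivity
  have hconv : Finset.Icc 1 (n+1) = Finset.Ico 1 (n+2) := rfl
  rw [hconv, Finset.sum_Ico_eq_sum_range]
  simp only [show n + 2 - 1 = n + 1 from rfl]
  have expand : ∀ j ∈ range (n+1),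
      (-1:ℚ)^(1+j) * (((n+1).choose (1+j) : ℕ) : ℚ) * ((1+j : ℕ) : ℚ) * harmonic (1+j)
      = -(((n:ℚ)+1) * ((-1:ℚ)^j * (n.choose j:ℚ) * harmonic j))
        - (((n:ℚ)+1) * ((-1:ℚ)^j * (n.choose j:ℚ) / (j+1))) := by
    intro j hj
    have h' : ((n+1).choose (j+1) : ℚ) * ((j:ℚ)+1) = ((n:ℚ)+1) * (n.choose j : ℚ) := by
      exact_mod_cast (congrArg (fun z : ℕ => (z:ℚ)) (Nat.add_one_mul_choose_eq n j)).symm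
    have hj1 : (j:ℚ) + 1 ≠ 0 := by positivity
    have hC : (((n+1).choose (j+1) : ℕ) : ℚ) = ((n:ℚ)+1) * (n.choose j:ℚ) / ((j:ℚ)+1) := by
      rw [eq_div_iff hj1]; exact h'
    rw [show 1 + j = j + 1 from by omega, harmonic_succ, hC]
    push_cast
    field_simp
    ring
  rw [Finset.sum_congr rfl expand, Finset.sum_sub_distrib, Finset.sum_neg_distrib,
    ← Finset.mul_sum, ← Finset.mul_sum, lemA n hn, lemB n]
  push_cast
  field_simp
  have h1 : (n:ℚ) + 1 - 1 = n := by ring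
  rw [h1, div_self hn0]
  ring
end

section
/- For all integers n ≥ 1, r ≥ 1 and 0 ≤ k ≤ n, the k-fold forward difference of the hyperharmonic numbers in the upper index gives h_{n−k}^{(r+k)} = ∑_{i=0}^{k} (−1)^{k−i}·binom(k,i)·h_n^{(r+i)}. -/
open Finset fwdDiff

lemma hyperharmonic_pred (m s : ℕ) (hm : 1 ≤ m) :
    hyperharmonic (m - 1) (s + 1) = hyperharmonic m (s + 1) - hyperharmonic m s := by
  obtain ⟨t, rfl⟩ := Nat.exists_eq_succ_of_ne_zero (by omega : m ≠ 0)
  have h1 : hyperharmonic (t + 1) (s + 1) = hyperharmonic t (s + 1) + hyperharmonic (t + 1) s := by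
    conv_lhs => rw [hyperharmonic]
    rw [Finset.sum_Icc_succ_top (by omega)]
    conv_lhs => rw [← hyperharmonic]
  simp only [Nat.succ_sub_one]
  rw [h1]; ring

lemma hyperharmonic_fwdDiff_iter (k : ℕ) : ∀ n r : ℕ, k ≤ n →
    (fwdDiff (1:ℕ))^[k] (fun j => hyperharmonic n (r + j)) 0 = hyperharmonic (n - k) (r + k) := by
  induction k with
  | zero => intro n r _; simp
  | succ k ih =>
    intro n r hkn
    rw [Function.iterate_succ_apply]
    have hΔ : fwdDiff (1:ℕ) (fun j => hyperharmonic n (r + j))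
        = fun j => hyperharmonic (n - 1) (r + 1 + j) := by
      funext j
      simp only [fwdDiff]
      have := hyperharmonic_pred n (r + j) (by omega)
      rw [show r + 1 + j = r + j + 1 by omega, this]
      rfl
    rw [hΔ, ih (n - 1) (r + 1) (by omega)]
    congr 1 <;> omega

theorem hyperharmonic_fdiff_upper_index (n k r : ℕ) (hn : 1 ≤ n) (hr : 1 ≤ r) (hkn : k ≤ n) :
    hyperharmonic (n - k) (r + k) =
      ∑ i ∈ Finset.range (k + 1),
        (-1 : ℝ) ^ (k - i) * (Nat.choose k i : ℝ) * hyperharmonic n (r + i) := by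
  rw [← hyperharmonic_fwdDiff_iter k n r hkn,
    fwdDiff_iter_eq_sum_shift (1 : ℕ) (fun j => hyperharmonic n (r + j)) k 0]
  apply Finset.sum_congr rfl
  intro i _
  simp [zsmul_eq_mul, mul_assoc]
end

section
/- For every integer k ≥ 1, the harmonic number H_k satisfies H_k = ∑_{i=1}^{k} (−1)^{k−i}·binom(k,i)·h_i^{(k+1)}, and moreover 1/k = ∑_{i=1}^{k} (−1)^{k−i}·binom(k,i)·h_i^{(k)}. -/
/-- closed formula for hyperharmonic numbers -/
lemma hh_formula (r : ℕ) : ∀ n : ℕ, hyperharmonic n (r + 1) =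
    ∑ j ∈ Finset.Icc 1 n, ((n - j + r).choose r : ℝ) / j := by
  induction r with
  | zero =>
    intro n
    rw [hyperharmonic]
    refine Finset.sum_congr rfl fun j hj => ?_
    rw [hyperharmonic]
    simp
  | succ r ih =>
    intro n
    rw [hyperharmonic]
    have h1 : ∑ m ∈ Finset.Icc 1 n, hyperharmonic m (r + 1)
        = ∑ m ∈ Finset.Icc 1 n, ∑ j ∈ Finset.Icc 1 m, ((m - j + r).choose r : ℝ) / j := by
      exact Finset.sum_congr rfl fun m _ => ih m
    rw [h1]
    rw [Finset.sum_comm' (t' := Finset.Icc 1 n) (s' := fun j => Finset.Icc j n)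
      (by intro m j; simp only [Finset.mem_Icc]; omega)]
    refine Finset.sum_congr rfl fun j hj => ?_
    simp only [Finset.mem_Icc] at hj
    rw [← Finset.sum_div]
    congr 1
    have h2 : ∑ m ∈ Finset.Icc j n, ((m - j + r).choose r : ℝ)
        = ((∑ m ∈ Finset.Icc j n, (m - j + r).choose r : ℕ) : ℝ) := by push_cast; ring
    rw [h2]
    congr 1
    rw [← Finset.Ico_add_one_right_eq_Icc, Finset.sum_Ico_eq_sum_range]
    have h3 : n + 1 - j = (n - j) + 1 := by omega
    rw [h3]
    have h4 : ∀ i, (j + i - j + r).choose r = (i + r).choose r := by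
      intro i; congr 1; omega
    simp only [h4]
    rw [Nat.sum_range_add_choose]
    congr 1

lemma alt_real (m : ℕ) :
    ∑ t ∈ Finset.range (m + 1), (-1 : ℝ) ^ t * (m.choose t : ℝ) =
      if m = 0 then 1 else 0 := by
  have := Int.alternating_sum_range_choose (n := m)
  have h2 : ((∑ t ∈ Finset.range (m + 1), ((-1) ^ t * m.choose t : ℤ) : ℤ) : ℝ)
      = ∑ t ∈ Finset.range (m + 1), (-1 : ℝ) ^ t * (m.choose t : ℝ) := by
    push_cast; rfl
  rw [← h2, this]
  split <;> norm_num

lemma lem_s (k s : ℕ) (hs : s ≤ k) :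
    ∑ i ∈ Finset.range (k + 1), (-1 : ℝ) ^ (k - i) * (k.choose i : ℝ) * (i.choose s : ℝ) =
      if s = k then 1 else 0 := by
  have hsplit : Finset.range (k + 1) = Finset.range s ∪ Finset.Ico s (k + 1) := by
    rw [Finset.range_eq_Ico, ← Finset.Ico_union_Ico_eq_Ico (Nat.zero_le s) (by omega),
      ← Finset.range_eq_Ico]
  rw [hsplit, Finset.sum_union (by
    simp [Finset.disjoint_left, Finset.mem_Ico]; omega)]
  have h0 : ∑ i ∈ Finset.range s, (-1 : ℝ) ^ (k - i) * (k.choose i : ℝ) * (i.choose s : ℝ) = 0 := by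
    refine Finset.sum_eq_zero fun i hi => ?_
    simp only [Finset.mem_range] at hi
    rw [Nat.choose_eq_zero_of_lt hi]
    simp
  rw [h0, zero_add, Finset.sum_Ico_eq_sum_range]
  have hkey : ∀ t ∈ Finset.range (k + 1 - s),
      (-1 : ℝ) ^ (k - (s + t)) * (k.choose (s + t) : ℝ) * ((s + t).choose s : ℝ)
      = (k.choose s : ℝ) * ((-1 : ℝ) ^ (k - s) * ((-1 : ℝ) ^ t * ((k - s).choose t : ℝ))) := by
    intro t ht
    simp only [Finset.mem_range] at ht
    have h1 : k.choose (s + t) * (s + t).choose s = k.choose s * (k - s).choose (s + t - s) := by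
      exact Nat.choose_mul (by omega)
    have h2 : s + t - s = t := by omega
    rw [h2] at h1
    have h3 : (-1 : ℝ) ^ (k - (s + t)) = (-1 : ℝ) ^ (k - s) * (-1 : ℝ) ^ t := by
      have : (k - s) = (k - (s + t)) + t := by omega
      rw [this, pow_add, mul_assoc, ← pow_add]
      simp [Even.neg_one_pow (⟨t, rfl⟩ : Even (t + t))]
    calc (-1 : ℝ) ^ (k - (s + t)) * (k.choose (s + t) : ℝ) * ((s + t).choose s : ℝ)
        = (-1 : ℝ) ^ (k - (s + t)) * ((k.choose (s + t) * (s + t).choose s : ℕ) : ℝ) := by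
          push_cast; ring
      _ = (-1 : ℝ) ^ (k - (s + t)) * ((k.choose s * (k - s).choose t : ℕ) : ℝ) := by rw [h1]
      _ = _ := by rw [h3]; push_cast; ring
  rw [Finset.sum_congr rfl hkey, ← Finset.mul_sum, ← Finset.mul_sum]
  have h4 : k + 1 - s = (k - s) + 1 := by omega
  rw [h4, alt_real (k - s)]
  by_cases hsk : s = k
  · subst hsk; simp
  · rw [if_neg (by omega), if_neg hsk]
    ring

lemma lem_inner (k c d : ℕ) (hd : d ≤ k) :
    ∑ i ∈ Finset.range (k + 1),
        (-1 : ℝ) ^ (k - i) * (k.choose i : ℝ) * ((i + c).choose d : ℝ) =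
      if d = k then 1 else 0 := by
  have hvdm : ∀ i : ℕ, ((i + c).choose d : ℝ)
      = ∑ s ∈ Finset.range (d + 1), (i.choose s : ℝ) * (c.choose (d - s) : ℝ) := by
    intro i
    rw [Nat.add_choose_eq]
    rw [Finset.Nat.sum_antidiagonal_eq_sum_range_succ (f := fun a b => i.choose a * c.choose b)]
    push_cast; rfl
  simp only [hvdm, Finset.mul_sum]
  rw [Finset.sum_comm]
  have hstep : ∀ s ∈ Finset.range (d + 1),
      ∑ i ∈ Finset.range (k + 1),
        (-1 : ℝ) ^ (k - i) * (k.choose i : ℝ) * ((i.choose s : ℝ) * (c.choose (d - s) : ℝ))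
      = (c.choose (d - s) : ℝ) * (if s = k then 1 else 0) := by
    intro s hs
    simp only [Finset.mem_range] at hs
    have : ∑ i ∈ Finset.range (k + 1),
        (-1 : ℝ) ^ (k - i) * (k.choose i : ℝ) * ((i.choose s : ℝ) * (c.choose (d - s) : ℝ))
        = (c.choose (d - s) : ℝ) * ∑ i ∈ Finset.range (k + 1),
            (-1 : ℝ) ^ (k - i) * (k.choose i : ℝ) * (i.choose s : ℝ) := by
      rw [Finset.mul_sum]
      exact Finset.sum_congr rfl fun i _ => by ring
    rw [this, lem_s k s (by omega)]
  rw [Finset.sum_congr rfl hstep]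
  by_cases hdk : d = k
  · subst hdk
    rw [Finset.sum_eq_single d]
    · simp
    · intro s hs hne
      rw [if_neg hne, mul_zero]
    · intro h; simp at h
  · rw [if_neg hdk]
    refine Finset.sum_eq_zero fun s hs => ?_
    simp only [Finset.mem_range] at hs
    rw [if_neg (by omega), mul_zero]

lemma lem_inner2 (k r j : ℕ) (hj : 1 ≤ j) (hjk : j ≤ k) (hjr : j ≤ r) (hrk : r ≤ k) :
    ∑ i ∈ Finset.Icc j k, (-1 : ℝ) ^ (k - i) * (k.choose i : ℝ) * ((i - j + r).choose r : ℝ) =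
      if r = k then 1 else 0 := by
  have hsub : Finset.Icc j k ⊆ Finset.range (k + 1) := by
    intro i hi; simp only [Finset.mem_Icc] at hi; simp only [Finset.mem_range]; omega
  have heq : ∀ i ∈ Finset.Icc j k,
      (-1 : ℝ) ^ (k - i) * (k.choose i : ℝ) * ((i - j + r).choose r : ℝ)
      = (-1 : ℝ) ^ (k - i) * (k.choose i : ℝ) * ((i + (r - j)).choose r : ℝ) := by
    intro i hi
    simp only [Finset.mem_Icc] at hi
    have h : i - j + r = i + (r - j) := by omega
    rw [h]
  rw [Finset.sum_congr rfl heq]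
  rw [Finset.sum_subset hsub (fun i hi hni => by
    simp only [Finset.mem_range] at hi
    simp only [Finset.mem_Icc, not_and, not_le] at hni
    have hij : i < j := by
      by_contra hcon
      push_neg at hcon
      have := hni hcon
      omega
    rw [Nat.choose_eq_zero_of_lt (show i + (r - j) < r by omega)]
    simp)]
  exact lem_inner k (r - j) r hrk

theorem harmonic_eq_alternating_sum_hyperharmonic (k : ℕ) (hk : 1 ≤ k) :
    ((harmonic k : ℚ) : ℝ) =
        ∑ i ∈ Finset.Icc 1 k,
          (-1 : ℝ) ^ (k - i) * (Nat.choose k i : ℝ) * hyperharmonic i (k + 1) ∧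
      1 / (k : ℝ) =
        ∑ i ∈ Finset.Icc 1 k,
          (-1 : ℝ) ^ (k - i) * (Nat.choose k i : ℝ) * hyperharmonic i k := by
  have hswap : ∀ r : ℕ,
      ∑ i ∈ Finset.Icc 1 k, (-1 : ℝ) ^ (k - i) * (k.choose i : ℝ) * hyperharmonic i (r + 1)
      = ∑ j ∈ Finset.Icc 1 k, (1 / (j : ℝ)) *
          ∑ i ∈ Finset.Icc j k, (-1 : ℝ) ^ (k - i) * (k.choose i : ℝ)
            * ((i - j + r).choose r : ℝ) := by
    intro r
    have h1 : ∀ i ∈ Finset.Icc 1 k,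
        (-1 : ℝ) ^ (k - i) * (k.choose i : ℝ) * hyperharmonic i (r + 1)
        = ∑ j ∈ Finset.Icc 1 i, (1 / (j : ℝ)) *
            ((-1 : ℝ) ^ (k - i) * (k.choose i : ℝ) * ((i - j + r).choose r : ℝ)) := by
      intro i _
      rw [hh_formula, Finset.mul_sum]
      exact Finset.sum_congr rfl fun j _ => by ring
    rw [Finset.sum_congr rfl h1]
    rw [Finset.sum_comm' (t' := Finset.Icc 1 k) (s' := fun j => Finset.Icc j k)
      (by intro i j; simp only [Finset.mem_Icc]; omega)]
    exact Finset.sum_congr rfl fun j _ => by rw [Finset.mul_sum]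
  constructor
  · rw [hswap k]
    have h2 : ∀ j ∈ Finset.Icc 1 k,
        (1 / (j : ℝ)) * ∑ i ∈ Finset.Icc j k,
          (-1 : ℝ) ^ (k - i) * (k.choose i : ℝ) * ((i - j + k).choose k : ℝ)
        = 1 / (j : ℝ) := by
      intro j hj
      simp only [Finset.mem_Icc] at hj
      rw [lem_inner2 k k j hj.1 hj.2 hj.2 le_rfl, if_pos rfl, mul_one]
    rw [Finset.sum_congr rfl h2]
    rw [harmonic]
    push_cast
    rw [Finset.range_eq_Ico, ← Finset.Ico_add_one_right_eq_Icc, Finset.sum_Ico_eq_sum_range,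
      Finset.sum_Ico_eq_sum_range]
    simp only [Nat.add_sub_cancel, one_div]
    refine Finset.sum_congr rfl fun i _ => ?_
    norm_num [add_comm 1 i]
  · obtain ⟨r, rfl⟩ : ∃ r, k = r + 1 := ⟨k - 1, by omega⟩
    rw [hswap r]
    rw [Finset.sum_Icc_succ_top (by omega : 1 ≤ r + 1)]
    have hz : ∑ j ∈ Finset.Icc 1 r, (1 / (j : ℝ)) *
        ∑ i ∈ Finset.Icc j (r + 1), (-1 : ℝ) ^ (r + 1 - i) * ((r + 1).choose i : ℝ)
          * ((i - j + r).choose r : ℝ) = 0 := by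
      refine Finset.sum_eq_zero fun j hj => ?_
      simp only [Finset.mem_Icc] at hj
      rw [lem_inner2 (r + 1) r j hj.1 (by omega) hj.2 (by omega), if_neg (by omega), mul_zero]
    rw [hz, zero_add, Finset.Icc_self, Finset.sum_singleton]
    simp
end
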